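/- Let n be a prime number and q a prime power not divisible by n such that q is a primitive root modulo n (i.e., the multiplicative order of q modulo n is n−1). Then for every integer k with 1 < k < n−1, there is no k-normal element of F_{q^n} over F_q. -/

import Mathlib

open Polynomial

/-- For `f = Σ aᵢ xⁱ ∈ F_q[x]` and `α ∈ F_{qⁿ}`, `qmap f α = Σ aᵢ α^(qⁱ)` (the action of
the `q`-associate linearized polynomial of `f` on `α`, i.e. `f ∘ α`). -/
noncomputable def qmap {Fq Fqn : Type*} [Field Fq] [Fintype Fq] [Field Fqn] [Algebra Fq Fqn]
    (f : Polynomial Fq) (α : Fqn) : Fqn :=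
  f.sum fun i a => a • α ^ (Fintype.card Fq) ^ i

/-- The `F_q`-subspace of `F_{qⁿ}` spanned by `α, α^q, …, α^(q^(n-1))`. -/
noncomputable def conjSpan (Fq : Type*) {Fqn : Type*} [Field Fq] [Fintype Fq] [Field Fqn]
    [Algebra Fq Fqn] (n : ℕ) (α : Fqn) : Submodule Fq Fqn :=
  Submodule.span Fq ((fun i : ℕ => α ^ (Fintype.card Fq) ^ i) '' Set.Iio n)

/-- The `q`-power Frobenius as an `Fq`-linear endomorphism of `Fqn`. -/
noncomputable def frobL (Fq Fqn : Type*) [Field Fq] [Fintype Fq] [Field Fqn] [Algebra Fq Fqn] :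
    Fqn →ₗ[Fq] Fqn where
  toFun x := x ^ Fintype.card Fq
  map_add' x y := by
    obtain ⟨p, hp⟩ := CharP.exists Fq
    haveI := hp
    haveI : CharP Fqn p := charP_of_injective_algebraMap (algebraMap Fq Fqn).injective p
    obtain ⟨m, hprime, hcard⟩ := FiniteField.card Fq p
    haveI : Fact p.Prime := ⟨hprime⟩
    show (x + y) ^ Fintype.card Fq = x ^ Fintype.card Fq + y ^ Fintype.card Fq
    rw [hcard, add_pow_char_pow]
  map_smul' a x := by
    simp only [RingHom.id_apply, Algebra.smul_def, mul_pow, ← map_pow, FiniteField.pow_card]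

lemma frobL_apply {Fq Fqn : Type*} [Field Fq] [Fintype Fq] [Field Fqn] [Algebra Fq Fqn]
    (x : Fqn) : frobL Fq Fqn x = x ^ Fintype.card Fq := rfl

lemma frobL_pow {Fq Fqn : Type*} [Field Fq] [Fintype Fq] [Field Fqn] [Algebra Fq Fqn]
    (i : ℕ) (x : Fqn) : ((frobL Fq Fqn) ^ i) x = x ^ (Fintype.card Fq) ^ i := by
  induction i with
  | zero => simp
  | succ i ih =>
    rw [pow_succ', Module.End.mul_apply, ih, frobL_apply, ← pow_mul, ← pow_succ]

/-- Irreducibility of the `n`-th cyclotomic polynomial over `Fq` when `q` is a primitive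
root mod `n`. -/
lemma cyclotomic_irreducible_aux (Fq : Type*) [Field Fq] [Fintype Fq] (n : ℕ)
    (hn : n.Prime) (hndvd : ¬ n ∣ Fintype.card Fq)
    (hprim : orderOf ((Fintype.card Fq : ℕ) : ZMod n) = n - 1) :
    Irreducible (cyclotomic n Fq) := by
  haveI := Fact.mk hn
  haveI : NeZero n := ⟨hn.ne_zero⟩
  set q := Fintype.card Fq with hq
  have hn2 : 2 ≤ n := hn.two_le
  have hC0 : cyclotomic n Fq ≠ 0 := cyclotomic_ne_zero n Fq
  have hdegC : (cyclotomic n Fq).natDegree = n - 1 := by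
    rw [natDegree_cyclotomic, Nat.totient_prime hn]
  have hCunit : ¬ IsUnit (cyclotomic n Fq) := by
    apply not_isUnit_of_natDegree_pos
    omega
  obtain ⟨h, hmono, hirr, hdvd⟩ := exists_monic_irreducible_factor _ hCunit
  haveI := Fact.mk hirr
  set K := AdjoinRoot h with hK
  have hh0 : h ≠ 0 := hirr.ne_zero
  have hfd : Module.finrank Fq K = h.natDegree := by
    have := (AdjoinRoot.powerBasis hh0).finrank
    simpa [AdjoinRoot.powerBasis] using this
  haveI : Module.Finite Fq K := Module.Finite.of_basis (AdjoinRoot.powerBasis hh0).basis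
  haveI : Finite K := Module.finite_of_finite Fq
  haveI : Fintype K := Fintype.ofFinite K
  have hcardK : Fintype.card K = q ^ h.natDegree := by
    rw [Module.card_eq_pow_finrank (K := Fq), hfd]
  set ζ : K := AdjoinRoot.root h with hζ
  have hζh : (Polynomial.aeval ζ) h = 0 := by
    rw [aeval_def, AdjoinRoot.algebraMap_eq, AdjoinRoot.eval₂_root]
  have hζC : IsRoot (cyclotomic n K) ζ := by
    obtain ⟨w, hw⟩ := hdvd
    have h1 : (Polynomial.aeval ζ) (cyclotomic n Fq) = 0 := by
      rw [hw, map_mul, hζh, zero_mul]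
    have h2 : IsRoot (map (algebraMap Fq K) (cyclotomic n Fq)) ζ := by
      rw [IsRoot.def, eval_map, ← aeval_def, h1]
    rwa [map_cyclotomic] at h2
  haveI : NeZero (n : K) := by
    obtain ⟨p, hp⟩ := CharP.exists Fq
    haveI := hp
    haveI : CharP K p := charP_of_injective_algebraMap (algebraMap Fq K).injective p
    obtain ⟨m, hpprime, hcard⟩ := FiniteField.card Fq p
    constructor
    rw [Ne, CharP.cast_eq_zero_iff K p n]
    intro hpn
    have hpn' : p = n := (Nat.prime_dvd_prime_iff_eq hpprime hn).mp hpn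
    apply hndvd
    rw [hq, hcard, hpn']
    exact dvd_pow_self n m.pos.ne'
  have hprimroot : IsPrimitiveRoot ζ n := isRoot_cyclotomic_iff.mp hζC
  have hζ0 : ζ ≠ 0 := hprimroot.ne_zero hn.ne_zero
  have hord : n ∣ q ^ h.natDegree - 1 := by
    have h2 : ζ ^ (Fintype.card K - 1) = 1 := FiniteField.pow_card_sub_one_eq_one ζ hζ0
    have h3 : orderOf ζ ∣ Fintype.card K - 1 := orderOf_dvd_of_pow_eq_one h2
    rwa [← hprimroot.eq_orderOf, hcardK] at h3
  have hq1 : 1 ≤ q ^ h.natDegree := Nat.one_le_pow _ _ Fintype.card_pos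
  have hzmod : ((q : ZMod n)) ^ h.natDegree = 1 := by
    have h4 : ((q ^ h.natDegree - 1 : ℕ) : ZMod n) = 0 :=
      (ZMod.natCast_eq_zero_iff _ _).mpr hord
    rw [Nat.cast_sub hq1, Nat.cast_pow, Nat.cast_one, sub_eq_zero] at h4
    exact h4
  have hdvd' : n - 1 ∣ h.natDegree := hprim ▸ orderOf_dvd_of_pow_eq_one hzmod
  have hdle : h.natDegree ≤ n - 1 := hdegC ▸ natDegree_le_of_dvd hdvd hC0
  have hdpos : 0 < h.natDegree := hirr.natDegree_pos
  have hdeq : h.natDegree = n - 1 := le_antisymm hdle (Nat.le_of_dvd hdpos hdvd')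
  obtain ⟨w, hw⟩ := hdvd
  have hw0 : w ≠ 0 := by
    rintro rfl
    rw [mul_zero] at hw
    exact hC0 hw
  have hwdeg : w.natDegree = 0 := by
    have h5 := congrArg natDegree hw
    rw [natDegree_mul hh0 hw0, hdeq, hdegC] at h5
    omega
  have hCmonic : (cyclotomic n Fq).Monic := cyclotomic.monic n Fq
  have hw1 : w = 1 := by
    have hlc := congrArg leadingCoeff hw
    rw [leadingCoeff_mul, hmono.leadingCoeff, one_mul, hCmonic.leadingCoeff] at hlc
    have h6 : w = C w.leadingCoeff := by
      conv_lhs => rw [eq_C_of_natDegree_eq_zero hwdeg]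
      rw [leadingCoeff, hwdeg]
    rw [h6, ← hlc, map_one]
  rw [hw1, mul_one] at hw
  rw [hw]
  exact hirr

/-- Let `n` be a prime number, and let `q` be a prime power not divisible by `n` that is
a primitive root modulo `n` (the multiplicative order of `q` mod `n` is `n - 1`).  Then,
for every `1 < k < n - 1`, there is no `k`-normal element of `F_{qⁿ}` over `F_q`. -/
theorem stmt_17 (Fq Fqn : Type*) [Field Fq] [Fintype Fq] [Field Fqn] [Fintype Fqn]
    [Algebra Fq Fqn] (q n : ℕ) (hq : q = Fintype.card Fq)
    (hn : n.Prime) (hdeg : Module.finrank Fq Fqn = n)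
    (hndvd : ¬ n ∣ q) (hprim : orderOf (q : ZMod n) = n - 1)
    (k : ℕ) (hk1 : 1 < k) (hk2 : k < n - 1) :
    ¬ ∃ α : Fqn, Module.finrank Fq (conjSpan Fq n α) = n - k := by
  subst hq
  haveI := Fact.mk hn
  rintro ⟨α, hα⟩
  have hn2 : 2 ≤ n := hn.two_le
  have hkn : k + 2 ≤ n := by omega
  set φ := frobL Fq Fqn with hφ
  have hcardn : Fintype.card Fqn = (Fintype.card Fq) ^ n := by
    rw [Module.card_eq_pow_finrank (K := Fq) (V := Fqn), hdeg]
  have hfix : ∀ x : Fqn, x ^ (Fintype.card Fq) ^ n = x := fun x => by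
    rw [← hcardn, FiniteField.pow_card]
  have hmod : ∀ (x : Fqn) (i : ℕ), x ^ (Fintype.card Fq) ^ i = x ^ (Fintype.card Fq) ^ (i % n) := by
    intro x i
    induction i using Nat.strong_induction_on with
    | _ i ih =>
      rcases lt_or_ge i n with hlt | hge
      · rw [Nat.mod_eq_of_lt hlt]
      · have h1 : i = (i - n) + n := by omega
        have h2 : x ^ (Fintype.card Fq) ^ i = x ^ (Fintype.card Fq) ^ (i - n) := by
          conv_lhs => rw [h1]
          rw [pow_add, pow_mul, hfix]
        rw [h2, ih (i - n) (by omega), ← Nat.mod_eq_sub_mod hge]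
  set θ : Polynomial Fq →ₗ[Fq] Fqn :=
    (LinearMap.applyₗ α) ∘ₗ (Polynomial.aeval φ).toLinearMap with hθdef
  have hθ : ∀ f, θ f = Polynomial.aeval φ f α := fun f => rfl
  have hθmono : ∀ (i : ℕ) (a : Fq),
      θ (Polynomial.monomial i a) = a • α ^ (Fintype.card Fq) ^ i := by
    intro i a
    rw [hθ, Polynomial.aeval_monomial, Module.End.mul_apply, frobL_pow,
      Module.algebraMap_end_apply]
  have hθX : ∀ i : ℕ, θ ((X : Polynomial Fq) ^ i) = α ^ (Fintype.card Fq) ^ i := by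
    intro i
    rw [hθ, map_pow, aeval_X, frobL_pow]
  have hXn : θ ((X : Polynomial Fq) ^ n - 1) = 0 := by
    rw [map_sub, hθX, hθ, map_one, Module.End.one_apply, hfix, sub_self]
  -- the annihilator ideal
  set I : Ideal (Polynomial Fq) :=
    { carrier := {f | θ f = 0}
      add_mem' := fun {f} {g} hf hg => by
        show θ (f + g) = 0
        rw [map_add]
        simp only [Set.mem_setOf_eq] at hf hg
        rw [hf, hg, add_zero]
      zero_mem' := map_zero θ
      smul_mem' := fun c f hf => by
        show θ (c • f) = 0
        simp only [Set.mem_setOf_eq] at hf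
        rw [smul_eq_mul, hθ, map_mul, Module.End.mul_apply, ← hθ f, hf, map_zero] } with hI
  have hmemI : ∀ f, f ∈ I ↔ θ f = 0 := fun f => Iff.rfl
  obtain ⟨g₀, hg₀⟩ := (IsPrincipalIdealRing.principal I).principal
  have hmemI' : ∀ f, f ∈ I ↔ g₀ ∣ f := by
    intro f
    rw [hg₀]
    exact Ideal.mem_span_singleton
  have hXn0 : (X : Polynomial Fq) ^ n - 1 ≠ 0 := by
    have h7 := X_pow_sub_C_ne_zero (show 0 < n by omega) (1 : Fq)
    simpa using h7
  have hg₀0 : g₀ ≠ 0 := by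
    rintro rfl
    exact hXn0 (zero_dvd_iff.mp ((hmemI' _).mp hXn))
  set g : Polynomial Fq := g₀ * C g₀.leadingCoeff⁻¹ with hgdef
  have hgm : g.Monic := monic_mul_leadingCoeff_inv hg₀0
  have hdvd1 : g₀ ∣ g := dvd_mul_right _ _
  have hdvd2 : g ∣ g₀ := ⟨C g₀.leadingCoeff, by
    rw [mul_assoc, ← C_mul, inv_mul_cancel₀ (leadingCoeff_ne_zero.mpr hg₀0), C_1, mul_one]⟩
  have hmem : ∀ f, f ∈ I ↔ g ∣ f :=
    fun f => (hmemI' f).trans ⟨fun hh => hdvd2.trans hh, fun hh => hdvd1.trans hh⟩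
  have hg0 : g ≠ 0 := hgm.ne_zero
  have hgdvd : g ∣ (X : Polynomial Fq) ^ n - 1 := (hmem _).mp hXn
  set d := g.natDegree with hd
  have hdegg : g.degree = (d : ℕ) := degree_eq_natDegree hg0
  -- the restricted map
  set ψ : degreeLT Fq d →ₗ[Fq] Fqn := θ ∘ₗ (degreeLT Fq d).subtype with hψdef
  have hψ : ∀ f : degreeLT Fq d, ψ f = θ f.1 := fun f => rfl
  have hinj : Function.Injective ψ := by
    rw [← LinearMap.ker_eq_bot]
    apply LinearMap.ker_eq_bot'.mpr
    intro f hf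
    have h8 : g ∣ (f : Polynomial Fq) := (hmem _).mp (by rw [hmemI]; exact hf)
    have h9 : (f : Polynomial Fq).degree < g.degree := by
      rw [hdegg]
      exact mem_degreeLT.mp f.2
    exact Subtype.ext (eq_zero_of_dvd_of_degree_lt h8 h9)
  have hrangeθ : ∀ f, θ f ∈ LinearMap.range ψ := by
    intro f
    refine ⟨⟨f %ₘ g, ?_⟩, ?_⟩
    · rw [mem_degreeLT, ← hdegg]
      exact degree_modByMonic_lt f hgm
    · show θ (f %ₘ g) = θ f
      have h10 : f %ₘ g + g * (f /ₘ g) = f := modByMonic_add_div f g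
      have hz : θ (g * (f /ₘ g)) = 0 := (hmem _).mpr (dvd_mul_right _ _)
      conv_rhs => rw [← h10]
      rw [map_add, hz, add_zero]
  have hrange : LinearMap.range ψ = conjSpan Fq n α := by
    apply le_antisymm
    · rintro x ⟨f, rfl⟩
      rw [hψ]
      generalize (f : Polynomial Fq) = f'
      induction f' using Polynomial.induction_on' with
      | add p r hp hr =>
        rw [map_add]
        exact add_mem hp hr
      | monomial i a =>
        rw [hθmono, hmod α i]
        exact Submodule.smul_mem _ _
          (Submodule.subset_span ⟨i % n, Nat.mod_lt i (by omega), rfl⟩)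
    · rw [conjSpan, Submodule.span_le]
      rintro x ⟨i, _, rfl⟩
      show α ^ (Fintype.card Fq) ^ i ∈ (LinearMap.range ψ : Set Fqn)
      rw [← hθX i]
      exact hrangeθ _
  have e1 : Module.finrank Fq (conjSpan Fq n α) = d := by
    rw [← hrange, ← LinearEquiv.finrank_eq (LinearEquiv.ofInjective ψ hinj),
      LinearEquiv.finrank_eq (degreeLTEquiv Fq d), Module.finrank_fin_fun]
  have hdk : d = n - k := e1.symm.trans hα
  -- now the factorization argument
  have hirrC : Irreducible (cyclotomic n Fq) :=
    cyclotomic_irreducible_aux Fq n hn hndvd hprim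
  have hfac : (X : Polynomial Fq) ^ n - 1 = cyclotomic n Fq * (X - 1) :=
    (cyclotomic_prime_mul_X_sub_one Fq n).symm
  have hC0 : cyclotomic n Fq ≠ 0 := cyclotomic_ne_zero n Fq
  have hdegC : (cyclotomic n Fq).natDegree = n - 1 := by
    rw [natDegree_cyclotomic, Nat.totient_prime hn]
  by_cases hCg : cyclotomic n Fq ∣ g
  · obtain ⟨t, ht⟩ := hCg
    have ht0 : t ≠ 0 := by
      rintro rfl
      rw [mul_zero] at ht
      exact hg0 ht
    have h11 : d = (n - 1) + t.natDegree := by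
      rw [hd, ht, natDegree_mul hC0 ht0, hdegC]
    omega
  · have hcop : IsCoprime (cyclotomic n Fq) g :=
      (Irreducible.coprime_iff_not_dvd hirrC).mpr hCg
    have hgX1 : g ∣ (X - 1 : Polynomial Fq) := by
      have h12 := hgdvd
      rw [hfac] at h12
      exact hcop.symm.dvd_of_dvd_mul_left h12
    have hX10 : (X - 1 : Polynomial Fq) ≠ 0 := by
      have h13 := X_sub_C_ne_zero (1 : Fq)
      simpa using h13
    have h14 : d ≤ 1 := by
      have h15 := natDegree_le_of_dvd hgX1 hX10
      have h16 : (X - 1 : Polynomial Fq).natDegree = 1 := by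
        have := natDegree_X_sub_C (1 : Fq)
        simpa using this
      omega
    omega
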